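/- θ-analogue of the Oppermann conjecture: for every integer m ≥ 2 there exists n with (m - 1/2)² < θ_n ≤ m², and there exists n with m² < θ_n ≤ (m + 1/2)², where θ_n = ∑_{i=1}^n ln(p_i). -/

import Mathlib

noncomputable def p (n : ℕ) : ℕ := Nat.nth Nat.Prime (n - 1)

noncomputable def θ (n : ℕ) : ℝ := ∑ i ∈ Finset.Icc 1 n, Real.log (p i)

lemma log_lb_aux (n t B : ℕ) (hn : 1 ≤ n) :
    (B:ℝ) * 0.6931471803 + (1 - (2:ℝ)^B / (n:ℝ)^t) ≤ (t:ℝ) * Real.log n := by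
  have hn0 : (0:ℝ) < (n:ℝ) := by exact_mod_cast hn
  have hnp : (0:ℝ) < (n:ℝ)^t := by positivity
  have h2p : (0:ℝ) < (2:ℝ)^B := by positivity
  have hr : (0:ℝ) < (n:ℝ)^t / 2^B := by positivity
  have h1 : Real.log ((n:ℝ)^t) = (t:ℝ) * Real.log n := Real.log_pow _ _
  have h2 : Real.log ((n:ℝ)^t / 2^B) = Real.log ((n:ℝ)^t) - (B:ℝ) * Real.log 2 := by
    rw [Real.log_div hnp.ne' h2p.ne']
    congr 1
    exact Real.log_pow _ _
  have h3 := Real.one_sub_inv_le_log_of_pos hr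
  have h4 : ((n:ℝ)^t / 2^B)⁻¹ = (2:ℝ)^B / (n:ℝ)^t := by field_simp
  rw [h4] at h3
  have h5 := Real.log_two_gt_d9
  have hB : (0:ℝ) ≤ (B:ℝ) := Nat.cast_nonneg B
  nlinarith [h3, h5, hB, h1, h2]

lemma log_ub_aux (n t B : ℕ) (hn : 1 ≤ n) :
    (t:ℝ) * Real.log n ≤ (B:ℝ) * 0.6931471808 + ((n:ℝ)^t / (2:ℝ)^B - 1) := by
  have hn0 : (0:ℝ) < (n:ℝ) := by exact_mod_cast hn
  have hnp : (0:ℝ) < (n:ℝ)^t := by positivity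
  have h2p : (0:ℝ) < (2:ℝ)^B := by positivity
  have hr : (0:ℝ) < (n:ℝ)^t / 2^B := by positivity
  have h1 : Real.log ((n:ℝ)^t) = (t:ℝ) * Real.log n := Real.log_pow _ _
  have h2 : Real.log ((n:ℝ)^t / 2^B) = Real.log ((n:ℝ)^t) - (B:ℝ) * Real.log 2 := by
    rw [Real.log_div hnp.ne' h2p.ne']
    congr 1
    exact Real.log_pow _ _
  have h3 := Real.log_le_sub_one_of_pos hr
  have h5 := Real.log_two_lt_d9
  have hB : (0:ℝ) ≤ (B:ℝ) := Nat.cast_nonneg B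
  nlinarith [h3, h5, hB, h1, h2]

lemma nthp (k q : ℕ) (hq : Nat.Prime q) (hc : Nat.count Nat.Prime q = k) :
    Nat.nth Nat.Prime k = q := by subst hc; exact Nat.nth_count hq

lemma theta_succ (n : ℕ) : θ (n+1) = θ n + Real.log (p (n+1)) :=
  Finset.sum_Icc_succ_top (by omega) _

lemma theta_one : θ 1 = Real.log 2 := by
  have h := nthp 0 2 (by norm_num) (by decide)
  simp [θ, p, h]

lemma theta_eq_sum (n : ℕ) : θ n = ∑ j ∈ Finset.range n, Real.log (Nat.nth Nat.Prime j) := by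
  unfold θ
  rw [← Finset.Ico_add_one_right_eq_Icc, Finset.sum_Ico_eq_sum_range]
  simp [p, Nat.add_sub_cancel_left]

lemma p_prime (n : ℕ) : Nat.Prime (p n) := Nat.prime_nth_prime _

lemma theta_nonneg (n : ℕ) : 0 ≤ θ n := by
  apply Finset.sum_nonneg
  intro i _
  exact Real.log_nonneg (by exact_mod_cast (p_prime i).one_lt.le)

lemma theta_ge (n : ℕ) : (n:ℝ) * Real.log 2 ≤ θ n := by
  induction n with
  | zero => simp [θ]
  | succ k ih =>
    rw [theta_succ]
    have h2 : Real.log 2 ≤ Real.log (p (k+1)) :=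
      Real.log_le_log (by norm_num) (by exact_mod_cast (p_prime (k+1)).two_le)
    push_cast
    linarith

lemma lb_2 : (0.693147:ℝ) ≤ Real.log 2 := by
  have h := log_lb_aux 2 1 1 (by norm_num); norm_num at h; linarith

lemma lb_3 : (1.098604:ℝ) ≤ Real.log 3 := by
  have h := log_lb_aux 3 12 19 (by norm_num); norm_num at h; linarith

lemma lb_5 : (1.608339:ℝ) ≤ Real.log 5 := by
  have h := log_lb_aux 5 10 23 (by norm_num); norm_num at h; linarith

lemma lb_7 : (1.945845:ℝ) ≤ Real.log 7 := by
  have h := log_lb_aux 7 5 14 (by norm_num); norm_num at h; linarith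

lemma lb_11 : (2.397832:ℝ) ≤ Real.log 11 := by
  have h := log_lb_aux 11 11 38 (by norm_num); norm_num at h; linarith

lemma lb_13 : (2.564948:ℝ) ≤ Real.log 13 := by
  have h := log_lb_aux 13 10 37 (by norm_num); norm_num at h; linarith

lemma lb_17 : (2.833164:ℝ) ≤ Real.log 17 := by
  have h := log_lb_aux 17 12 49 (by norm_num); norm_num at h; linarith

lemma lb_19 : (2.943083:ℝ) ≤ Real.log 19 := by
  have h := log_lb_aux 19 9 38 (by norm_num); norm_num at h; linarith

lemma lb_23 : (3.135230:ℝ) ≤ Real.log 23 := by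
  have h := log_lb_aux 23 2 9 (by norm_num); norm_num at h; linarith

lemma lb_29 : (3.367294:ℝ) ≤ Real.log 29 := by
  have h := log_lb_aux 29 7 34 (by norm_num); norm_num at h; linarith

lemma lb_31 : (3.430318:ℝ) ≤ Real.log 31 := by
  have h := log_lb_aux 31 12 59 (by norm_num); norm_num at h; linarith

lemma lb_37 : (3.610811:ℝ) ≤ Real.log 37 := by
  have h := log_lb_aux 37 5 26 (by norm_num); norm_num at h; linarith

lemma lb_41 : (3.713156:ℝ) ≤ Real.log 41 := by
  have h := log_lb_aux 41 3 16 (by norm_num); norm_num at h; linarith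

lemma lb_43 : (3.760941:ℝ) ≤ Real.log 43 := by
  have h := log_lb_aux 43 12 65 (by norm_num); norm_num at h; linarith

lemma lb_47 : (3.849932:ℝ) ≤ Real.log 47 := by
  have h := log_lb_aux 47 11 61 (by norm_num); norm_num at h; linarith

lemma lb_53 : (3.970290:ℝ) ≤ Real.log 53 := by
  have h := log_lb_aux 53 11 63 (by norm_num); norm_num at h; linarith

lemma lb_59 : (4.077426:ℝ) ≤ Real.log 59 := by
  have h := log_lb_aux 59 8 47 (by norm_num); norm_num at h; linarith

lemma lb_61 : (4.110324:ℝ) ≤ Real.log 61 := by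
  have h := log_lb_aux 61 12 71 (by norm_num); norm_num at h; linarith

lemma lb_67 : (4.203659:ℝ) ≤ Real.log 67 := by
  have h := log_lb_aux 67 1 6 (by norm_num); norm_num at h; linarith

lemma lb_71 : (4.262600:ℝ) ≤ Real.log 71 := by
  have h := log_lb_aux 71 7 43 (by norm_num); norm_num at h; linarith

lemma lb_73 : (4.290293:ℝ) ≤ Real.log 73 := by
  have h := log_lb_aux 73 11 68 (by norm_num); norm_num at h; linarith

lemma lb_79 : (4.369413:ℝ) ≤ Real.log 79 := by
  have h := log_lb_aux 79 10 63 (by norm_num); norm_num at h; linarith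

lemma lb_83 : (4.418840:ℝ) ≤ Real.log 83 := by
  have h := log_lb_aux 83 8 51 (by norm_num); norm_num at h; linarith

lemma lb_89 : (4.487511:ℝ) ≤ Real.log 89 := by
  have h := log_lb_aux 89 11 71 (by norm_num); norm_num at h; linarith

lemma lb_97 : (4.573953:ℝ) ≤ Real.log 97 := by
  have h := log_lb_aux 97 12 79 (by norm_num); norm_num at h; linarith

lemma lb_101 : (4.613926:ℝ) ≤ Real.log 101 := by
  have h := log_lb_aux 101 11 73 (by norm_num); norm_num at h; linarith

lemma lb_103 : (4.634449:ℝ) ≤ Real.log 103 := by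
  have h := log_lb_aux 103 3 20 (by norm_num); norm_num at h; linarith

lemma lb_107 : (4.672315:ℝ) ≤ Real.log 107 := by
  have h := log_lb_aux 107 11 74 (by norm_num); norm_num at h; linarith

lemma lb_109 : (4.691035:ℝ) ≤ Real.log 109 := by
  have h := log_lb_aux 109 4 27 (by norm_num); norm_num at h; linarith

lemma lb_113 : (4.727377:ℝ) ≤ Real.log 113 := by
  have h := log_lb_aux 113 11 75 (by norm_num); norm_num at h; linarith

lemma lb_127 : (4.831822:ℝ) ≤ Real.log 127 := by
  have h := log_lb_aux 127 12 83 (by norm_num); norm_num at h; linarith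

lemma lb_131 : (4.874931:ℝ) ≤ Real.log 131 := by
  have h := log_lb_aux 131 1 7 (by norm_num); norm_num at h; linarith

lemma lb_137 : (4.919849:ℝ) ≤ Real.log 137 := by
  have h := log_lb_aux 137 11 78 (by norm_num); norm_num at h; linarith

lemma ub_3 : Real.log 3 ≤ (1.098620:ℝ) := by
  have h := log_ub_aux 3 12 19 (by norm_num); norm_num at h; linarith

lemma ub_5 : Real.log 5 ≤ (1.610654:ℝ) := by
  have h := log_ub_aux 5 10 23 (by norm_num); norm_num at h; linarith

lemma ub_7 : Real.log 7 ≤ (1.945976:ℝ) := by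
  have h := log_ub_aux 7 5 14 (by norm_num); norm_num at h; linarith

lemma ub_11 : Real.log 11 ≤ (2.397960:ℝ) := by
  have h := log_ub_aux 11 11 38 (by norm_num); norm_num at h; linarith

lemma ub_13 : Real.log 13 ≤ (2.564950:ℝ) := by
  have h := log_ub_aux 13 10 37 (by norm_num); norm_num at h; linarith

lemma ub_17 : Real.log 17 ≤ (2.833264:ℝ) := by
  have h := log_ub_aux 17 12 49 (by norm_num); norm_num at h; linarith

lemma ub_19 : Real.log 19 ≤ (2.945948:ℝ) := by
  have h := log_ub_aux 19 9 38 (by norm_num); norm_num at h; linarith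

lemma ub_23 : Real.log 23 ≤ (3.135764:ℝ) := by
  have h := log_ub_aux 23 2 9 (by norm_num); norm_num at h; linarith

lemma ub_29 : Real.log 29 ≤ (3.367298:ℝ) := by
  have h := log_ub_aux 29 7 34 (by norm_num); norm_num at h; linarith

lemma ub_31 : Real.log 31 ≤ (3.438506:ℝ) := by
  have h := log_ub_aux 31 12 59 (by norm_num); norm_num at h; linarith

lemma ub_37 : Real.log 37 ≤ (3.611027:ℝ) := by
  have h := log_ub_aux 37 5 26 (by norm_num); norm_num at h; linarith

lemma ub_41 : Real.log 41 ≤ (3.714002:ℝ) := by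
  have h := log_ub_aux 41 3 16 (by norm_num); norm_num at h; linarith

lemma ub_43 : Real.log 43 ≤ (3.761473:ℝ) := by
  have h := log_ub_aux 43 12 65 (by norm_num); norm_num at h; linarith

lemma ub_47 : Real.log 47 ≤ (3.850374:ℝ) := by
  have h := log_ub_aux 47 11 61 (by norm_num); norm_num at h; linarith

lemma ub_53 : Real.log 53 ≤ (3.970294:ℝ) := by
  have h := log_ub_aux 53 11 63 (by norm_num); norm_num at h; linarith

lemma ub_59 : Real.log 59 ≤ (4.077652:ℝ) := by
  have h := log_ub_aux 59 8 47 (by norm_num); norm_num at h; linarith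

lemma ub_61 : Real.log 61 ≤ (4.111468:ℝ) := by
  have h := log_ub_aux 61 12 71 (by norm_num); norm_num at h; linarith

lemma ub_67 : Real.log 67 ≤ (4.205759:ℝ) := by
  have h := log_ub_aux 67 1 6 (by norm_num); norm_num at h; linarith

lemma ub_71 : Real.log 71 ≤ (4.262761:ℝ) := by
  have h := log_ub_aux 71 7 43 (by norm_num); norm_num at h; linarith

lemma ub_73 : Real.log 73 ≤ (4.290633:ℝ) := by
  have h := log_ub_aux 73 11 68 (by norm_num); norm_num at h; linarith

lemma ub_79 : Real.log 79 ≤ (4.369483:ℝ) := by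
  have h := log_ub_aux 79 10 63 (by norm_num); norm_num at h; linarith

lemma ub_83 : Real.log 83 ≤ (4.418841:ℝ) := by
  have h := log_ub_aux 83 8 51 (by norm_num); norm_num at h; linarith

lemma ub_89 : Real.log 89 ≤ (4.489890:ℝ) := by
  have h := log_ub_aux 89 11 71 (by norm_num); norm_num at h; linarith

lemma ub_97 : Real.log 97 ≤ (4.575542:ℝ) := by
  have h := log_ub_aux 97 12 79 (by norm_num); norm_num at h; linarith

lemma ub_101 : Real.log 101 ≤ (4.616455:ℝ) := by
  have h := log_ub_aux 101 11 73 (by norm_num); norm_num at h; linarith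

lemma ub_103 : Real.log 103 ≤ (4.635017:ℝ) := by
  have h := log_ub_aux 103 3 20 (by norm_num); norm_num at h; linarith

lemma ub_107 : Real.log 107 ≤ (4.673381:ℝ) := by
  have h := log_ub_aux 107 11 74 (by norm_num); norm_num at h; linarith

lemma ub_109 : Real.log 109 ≤ (4.691672:ℝ) := by
  have h := log_ub_aux 109 4 27 (by norm_num); norm_num at h; linarith

lemma ub_113 : Real.log 113 ≤ (4.727399:ℝ) := by
  have h := log_ub_aux 113 11 75 (by norm_num); norm_num at h; linarith

lemma ub_127 : Real.log 127 ≤ (4.862631:ℝ) := by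
  have h := log_ub_aux 127 12 83 (by norm_num); norm_num at h; linarith

lemma ub_131 : Real.log 131 ≤ (4.875468:ℝ) := by
  have h := log_ub_aux 131 1 7 (by norm_num); norm_num at h; linarith

lemma ub_137 : Real.log 137 ≤ (4.920118:ℝ) := by
  have h := log_ub_aux 137 11 78 (by norm_num); norm_num at h; linarith

lemma ub_139 : Real.log 139 ≤ (4.934609:ℝ) := by
  have h := log_ub_aux 139 9 64 (by norm_num); norm_num at h; linarith

lemma pv1 : p 1 = 2 := by
  have h := nthp 0 2 (by norm_num) (by decide)
  simpa [p] using h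

lemma pv2 : p 2 = 3 := by
  have h := nthp 1 3 (by norm_num) (by decide)
  simpa [p] using h

lemma pv3 : p 3 = 5 := by
  have h := nthp 2 5 (by norm_num) (by decide)
  simpa [p] using h

lemma pv4 : p 4 = 7 := by
  have h := nthp 3 7 (by norm_num) (by decide)
  simpa [p] using h

lemma pv5 : p 5 = 11 := by
  have h := nthp 4 11 (by norm_num) (by decide)
  simpa [p] using h

lemma pv6 : p 6 = 13 := by
  have h := nthp 5 13 (by norm_num) (by decide)
  simpa [p] using h

lemma pv7 : p 7 = 17 := by
  have h := nthp 6 17 (by norm_num) (by decide)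
  simpa [p] using h

lemma pv8 : p 8 = 19 := by
  have h := nthp 7 19 (by norm_num) (by decide)
  simpa [p] using h

lemma pv9 : p 9 = 23 := by
  have h := nthp 8 23 (by norm_num) (by decide)
  simpa [p] using h

lemma pv10 : p 10 = 29 := by
  have h := nthp 9 29 (by norm_num) (by decide)
  simpa [p] using h

lemma pv11 : p 11 = 31 := by
  have h := nthp 10 31 (by norm_num) (by decide)
  simpa [p] using h

lemma pv12 : p 12 = 37 := by
  have h := nthp 11 37 (by norm_num) (by decide)
  simpa [p] using h

lemma pv13 : p 13 = 41 := by
  have h := nthp 12 41 (by norm_num) (by decide)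
  simpa [p] using h

lemma pv14 : p 14 = 43 := by
  have h := nthp 13 43 (by norm_num) (by decide)
  simpa [p] using h

lemma pv15 : p 15 = 47 := by
  have h := nthp 14 47 (by norm_num) (by decide)
  simpa [p] using h

lemma pv16 : p 16 = 53 := by
  have h := nthp 15 53 (by norm_num) (by decide)
  simpa [p] using h

lemma pv17 : p 17 = 59 := by
  have h := nthp 16 59 (by norm_num) (by decide)
  simpa [p] using h

lemma pv18 : p 18 = 61 := by
  have h := nthp 17 61 (by norm_num) (by decide)
  simpa [p] using h

lemma pv19 : p 19 = 67 := by
  have h := nthp 18 67 (by norm_num) (by decide)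
  simpa [p] using h

lemma pv20 : p 20 = 71 := by
  have h := nthp 19 71 (by norm_num) (by decide)
  simpa [p] using h

lemma pv21 : p 21 = 73 := by
  have h := nthp 20 73 (by norm_num) (by decide)
  simpa [p] using h

lemma pv22 : p 22 = 79 := by
  have h := nthp 21 79 (by norm_num) (by decide)
  simpa [p] using h

lemma pv23 : p 23 = 83 := by
  have h := nthp 22 83 (by norm_num) (by decide)
  simpa [p] using h

lemma pv24 : p 24 = 89 := by
  have h := nthp 23 89 (by norm_num) (by decide)
  simpa [p] using h

set_option maxRecDepth 100000 in
lemma pv25 : p 25 = 97 := by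
  have h := nthp 24 97 (by norm_num) (by decide)
  simpa [p] using h

set_option maxRecDepth 100000 in
lemma pv26 : p 26 = 101 := by
  have h := nthp 25 101 (by norm_num) (by decide)
  simpa [p] using h

set_option maxRecDepth 100000 in
lemma pv27 : p 27 = 103 := by
  have h := nthp 26 103 (by norm_num) (by decide)
  simpa [p] using h

set_option maxRecDepth 100000 in
lemma pv28 : p 28 = 107 := by
  have h := nthp 27 107 (by norm_num) (by decide)
  simpa [p] using h

set_option maxRecDepth 100000 in
lemma pv29 : p 29 = 109 := by
  have h := nthp 28 109 (by norm_num) (by decide)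
  simpa [p] using h

set_option maxRecDepth 100000 in
lemma pv30 : p 30 = 113 := by
  have h := nthp 29 113 (by norm_num) (by decide)
  simpa [p] using h

set_option maxRecDepth 100000 in
lemma pv31 : p 31 = 127 := by
  have h := nthp 30 127 (by norm_num) (by decide)
  simpa [p] using h

set_option maxRecDepth 100000 in
lemma pv32 : p 32 = 131 := by
  have h := nthp 31 131 (by norm_num) (by decide)
  simpa [p] using h

set_option maxRecDepth 100000 in
lemma pv33 : p 33 = 137 := by
  have h := nthp 32 137 (by norm_num) (by decide)
  simpa [p] using h

set_option maxRecDepth 100000 in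
lemma pv34 : p 34 = 139 := by
  have h := nthp 33 139 (by norm_num) (by decide)
  simpa [p] using h

set_option maxRecDepth 100000 in
lemma pv35 : p 35 = 149 := by
  have h := nthp 34 149 (by norm_num) (by decide)
  simpa [p] using h

lemma T1 : (0.693147:ℝ) ≤ θ 1 := by
  rw [theta_one]; linarith [lb_2]

lemma T2 : (1.791751:ℝ) ≤ θ 2 := by
  rw [show (2:ℕ) = 1+1 from rfl, theta_succ, pv2]
  linarith [T1, lb_3]

lemma T3 : (3.400090:ℝ) ≤ θ 3 := by
  rw [show (3:ℕ) = 2+1 from rfl, theta_succ, pv3]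
  linarith [T2, lb_5]

lemma T4 : (5.345935:ℝ) ≤ θ 4 := by
  rw [show (4:ℕ) = 3+1 from rfl, theta_succ, pv4]
  linarith [T3, lb_7]

lemma T5 : (7.743767:ℝ) ≤ θ 5 := by
  rw [show (5:ℕ) = 4+1 from rfl, theta_succ, pv5]
  linarith [T4, lb_11]

lemma T6 : (10.308715:ℝ) ≤ θ 6 := by
  rw [show (6:ℕ) = 5+1 from rfl, theta_succ, pv6]
  linarith [T5, lb_13]

lemma T7 : (13.141879:ℝ) ≤ θ 7 := by
  rw [show (7:ℕ) = 6+1 from rfl, theta_succ, pv7]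
  linarith [T6, lb_17]

lemma T8 : (16.084962:ℝ) ≤ θ 8 := by
  rw [show (8:ℕ) = 7+1 from rfl, theta_succ, pv8]
  linarith [T7, lb_19]

lemma T9 : (19.220192:ℝ) ≤ θ 9 := by
  rw [show (9:ℕ) = 8+1 from rfl, theta_succ, pv9]
  linarith [T8, lb_23]

lemma T10 : (22.587486:ℝ) ≤ θ 10 := by
  rw [show (10:ℕ) = 9+1 from rfl, theta_succ, pv10]
  linarith [T9, lb_29]

lemma T11 : (26.017804:ℝ) ≤ θ 11 := by
  rw [show (11:ℕ) = 10+1 from rfl, theta_succ, pv11]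
  linarith [T10, lb_31]

lemma T12 : (29.628615:ℝ) ≤ θ 12 := by
  rw [show (12:ℕ) = 11+1 from rfl, theta_succ, pv12]
  linarith [T11, lb_37]

lemma T13 : (33.341771:ℝ) ≤ θ 13 := by
  rw [show (13:ℕ) = 12+1 from rfl, theta_succ, pv13]
  linarith [T12, lb_41]

lemma T14 : (37.102712:ℝ) ≤ θ 14 := by
  rw [show (14:ℕ) = 13+1 from rfl, theta_succ, pv14]
  linarith [T13, lb_43]

lemma T15 : (40.952644:ℝ) ≤ θ 15 := by
  rw [show (15:ℕ) = 14+1 from rfl, theta_succ, pv15]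
  linarith [T14, lb_47]

lemma T16 : (44.922934:ℝ) ≤ θ 16 := by
  rw [show (16:ℕ) = 15+1 from rfl, theta_succ, pv16]
  linarith [T15, lb_53]

lemma T17 : (49.000360:ℝ) ≤ θ 17 := by
  rw [show (17:ℕ) = 16+1 from rfl, theta_succ, pv17]
  linarith [T16, lb_59]

lemma T18 : (53.110684:ℝ) ≤ θ 18 := by
  rw [show (18:ℕ) = 17+1 from rfl, theta_succ, pv18]
  linarith [T17, lb_61]

lemma T19 : (57.314343:ℝ) ≤ θ 19 := by
  rw [show (19:ℕ) = 18+1 from rfl, theta_succ, pv19]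
  linarith [T18, lb_67]

lemma T20 : (61.576943:ℝ) ≤ θ 20 := by
  rw [show (20:ℕ) = 19+1 from rfl, theta_succ, pv20]
  linarith [T19, lb_71]

lemma T21 : (65.867236:ℝ) ≤ θ 21 := by
  rw [show (21:ℕ) = 20+1 from rfl, theta_succ, pv21]
  linarith [T20, lb_73]

lemma T22 : (70.236649:ℝ) ≤ θ 22 := by
  rw [show (22:ℕ) = 21+1 from rfl, theta_succ, pv22]
  linarith [T21, lb_79]

lemma T23 : (74.655489:ℝ) ≤ θ 23 := by
  rw [show (23:ℕ) = 22+1 from rfl, theta_succ, pv23]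
  linarith [T22, lb_83]

lemma T24 : (79.143000:ℝ) ≤ θ 24 := by
  rw [show (24:ℕ) = 23+1 from rfl, theta_succ, pv24]
  linarith [T23, lb_89]

lemma T25 : (83.716953:ℝ) ≤ θ 25 := by
  rw [show (25:ℕ) = 24+1 from rfl, theta_succ, pv25]
  linarith [T24, lb_97]

lemma T26 : (88.330879:ℝ) ≤ θ 26 := by
  rw [show (26:ℕ) = 25+1 from rfl, theta_succ, pv26]
  linarith [T25, lb_101]

lemma T27 : (92.965328:ℝ) ≤ θ 27 := by
  rw [show (27:ℕ) = 26+1 from rfl, theta_succ, pv27]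
  linarith [T26, lb_103]

lemma T28 : (97.637643:ℝ) ≤ θ 28 := by
  rw [show (28:ℕ) = 27+1 from rfl, theta_succ, pv28]
  linarith [T27, lb_107]

lemma T29 : (102.328678:ℝ) ≤ θ 29 := by
  rw [show (29:ℕ) = 28+1 from rfl, theta_succ, pv29]
  linarith [T28, lb_109]

lemma T30 : (107.056055:ℝ) ≤ θ 30 := by
  rw [show (30:ℕ) = 29+1 from rfl, theta_succ, pv30]
  linarith [T29, lb_113]

lemma T31 : (111.887877:ℝ) ≤ θ 31 := by
  rw [show (31:ℕ) = 30+1 from rfl, theta_succ, pv31]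
  linarith [T30, lb_127]

lemma T32 : (116.762808:ℝ) ≤ θ 32 := by
  rw [show (32:ℕ) = 31+1 from rfl, theta_succ, pv32]
  linarith [T31, lb_131]

lemma T33 : (121.682657:ℝ) ≤ θ 33 := by
  rw [show (33:ℕ) = 32+1 from rfl, theta_succ, pv33]
  linarith [T32, lb_137]

lemma K1 : Real.log (p 2) ≤ max (Real.sqrt (θ 1)) (3/2) + 1/4 := by
  rw [pv2]
  linarith [ub_3, le_max_right (Real.sqrt (θ 1)) (3/2:ℝ)]

lemma K2 : Real.log (p 3) ≤ max (Real.sqrt (θ 2)) (3/2) + 1/4 := by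
  rw [pv3]
  linarith [ub_5, le_max_right (Real.sqrt (θ 2)) (3/2:ℝ)]

lemma K3 : Real.log (p 4) ≤ max (Real.sqrt (θ 3)) (3/2) + 1/4 := by
  rw [pv4]
  have h1 := ub_7
  have h2 := T3
  have h3 : ((1.945976:ℝ) - 1/4) ≤ Real.sqrt ((3.400090:ℝ)) := by
    rw [Real.le_sqrt (by norm_num) (by norm_num)]
    norm_num
  have h4 : Real.sqrt ((3.400090:ℝ)) ≤ Real.sqrt (θ 3) := Real.sqrt_le_sqrt h2
  linarith [le_max_left (Real.sqrt (θ 3)) (3/2:ℝ)]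

lemma K4 : Real.log (p 5) ≤ max (Real.sqrt (θ 4)) (3/2) + 1/4 := by
  rw [pv5]
  have h1 := ub_11
  have h2 := T4
  have h3 : ((2.397960:ℝ) - 1/4) ≤ Real.sqrt ((5.345935:ℝ)) := by
    rw [Real.le_sqrt (by norm_num) (by norm_num)]
    norm_num
  have h4 : Real.sqrt ((5.345935:ℝ)) ≤ Real.sqrt (θ 4) := Real.sqrt_le_sqrt h2
  linarith [le_max_left (Real.sqrt (θ 4)) (3/2:ℝ)]

lemma K5 : Real.log (p 6) ≤ max (Real.sqrt (θ 5)) (3/2) + 1/4 := by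
  rw [pv6]
  have h1 := ub_13
  have h2 := T5
  have h3 : ((2.564950:ℝ) - 1/4) ≤ Real.sqrt ((7.743767:ℝ)) := by
    rw [Real.le_sqrt (by norm_num) (by norm_num)]
    norm_num
  have h4 : Real.sqrt ((7.743767:ℝ)) ≤ Real.sqrt (θ 5) := Real.sqrt_le_sqrt h2
  linarith [le_max_left (Real.sqrt (θ 5)) (3/2:ℝ)]

lemma K6 : Real.log (p 7) ≤ max (Real.sqrt (θ 6)) (3/2) + 1/4 := by
  rw [pv7]
  have h1 := ub_17
  have h2 := T6
  have h3 : ((2.833264:ℝ) - 1/4) ≤ Real.sqrt ((10.308715:ℝ)) := by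
    rw [Real.le_sqrt (by norm_num) (by norm_num)]
    norm_num
  have h4 : Real.sqrt ((10.308715:ℝ)) ≤ Real.sqrt (θ 6) := Real.sqrt_le_sqrt h2
  linarith [le_max_left (Real.sqrt (θ 6)) (3/2:ℝ)]

lemma K7 : Real.log (p 8) ≤ max (Real.sqrt (θ 7)) (3/2) + 1/4 := by
  rw [pv8]
  have h1 := ub_19
  have h2 := T7
  have h3 : ((2.945948:ℝ) - 1/4) ≤ Real.sqrt ((13.141879:ℝ)) := by
    rw [Real.le_sqrt (by norm_num) (by norm_num)]
    norm_num
  have h4 : Real.sqrt ((13.141879:ℝ)) ≤ Real.sqrt (θ 7) := Real.sqrt_le_sqrt h2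
  linarith [le_max_left (Real.sqrt (θ 7)) (3/2:ℝ)]

lemma K8 : Real.log (p 9) ≤ max (Real.sqrt (θ 8)) (3/2) + 1/4 := by
  rw [pv9]
  have h1 := ub_23
  have h2 := T8
  have h3 : ((3.135764:ℝ) - 1/4) ≤ Real.sqrt ((16.084962:ℝ)) := by
    rw [Real.le_sqrt (by norm_num) (by norm_num)]
    norm_num
  have h4 : Real.sqrt ((16.084962:ℝ)) ≤ Real.sqrt (θ 8) := Real.sqrt_le_sqrt h2
  linarith [le_max_left (Real.sqrt (θ 8)) (3/2:ℝ)]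

lemma K9 : Real.log (p 10) ≤ max (Real.sqrt (θ 9)) (3/2) + 1/4 := by
  rw [pv10]
  have h1 := ub_29
  have h2 := T9
  have h3 : ((3.367298:ℝ) - 1/4) ≤ Real.sqrt ((19.220192:ℝ)) := by
    rw [Real.le_sqrt (by norm_num) (by norm_num)]
    norm_num
  have h4 : Real.sqrt ((19.220192:ℝ)) ≤ Real.sqrt (θ 9) := Real.sqrt_le_sqrt h2
  linarith [le_max_left (Real.sqrt (θ 9)) (3/2:ℝ)]

lemma K10 : Real.log (p 11) ≤ max (Real.sqrt (θ 10)) (3/2) + 1/4 := by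
  rw [pv11]
  have h1 := ub_31
  have h2 := T10
  have h3 : ((3.438506:ℝ) - 1/4) ≤ Real.sqrt ((22.587486:ℝ)) := by
    rw [Real.le_sqrt (by norm_num) (by norm_num)]
    norm_num
  have h4 : Real.sqrt ((22.587486:ℝ)) ≤ Real.sqrt (θ 10) := Real.sqrt_le_sqrt h2
  linarith [le_max_left (Real.sqrt (θ 10)) (3/2:ℝ)]

lemma K11 : Real.log (p 12) ≤ max (Real.sqrt (θ 11)) (3/2) + 1/4 := by
  rw [pv12]
  have h1 := ub_37
  have h2 := T11
  have h3 : ((3.611027:ℝ) - 1/4) ≤ Real.sqrt ((26.017804:ℝ)) := by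
    rw [Real.le_sqrt (by norm_num) (by norm_num)]
    norm_num
  have h4 : Real.sqrt ((26.017804:ℝ)) ≤ Real.sqrt (θ 11) := Real.sqrt_le_sqrt h2
  linarith [le_max_left (Real.sqrt (θ 11)) (3/2:ℝ)]

lemma K12 : Real.log (p 13) ≤ max (Real.sqrt (θ 12)) (3/2) + 1/4 := by
  rw [pv13]
  have h1 := ub_41
  have h2 := T12
  have h3 : ((3.714002:ℝ) - 1/4) ≤ Real.sqrt ((29.628615:ℝ)) := by
    rw [Real.le_sqrt (by norm_num) (by norm_num)]
    norm_num
  have h4 : Real.sqrt ((29.628615:ℝ)) ≤ Real.sqrt (θ 12) := Real.sqrt_le_sqrt h2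
  linarith [le_max_left (Real.sqrt (θ 12)) (3/2:ℝ)]

lemma K13 : Real.log (p 14) ≤ max (Real.sqrt (θ 13)) (3/2) + 1/4 := by
  rw [pv14]
  have h1 := ub_43
  have h2 := T13
  have h3 : ((3.761473:ℝ) - 1/4) ≤ Real.sqrt ((33.341771:ℝ)) := by
    rw [Real.le_sqrt (by norm_num) (by norm_num)]
    norm_num
  have h4 : Real.sqrt ((33.341771:ℝ)) ≤ Real.sqrt (θ 13) := Real.sqrt_le_sqrt h2
  linarith [le_max_left (Real.sqrt (θ 13)) (3/2:ℝ)]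

lemma K14 : Real.log (p 15) ≤ max (Real.sqrt (θ 14)) (3/2) + 1/4 := by
  rw [pv15]
  have h1 := ub_47
  have h2 := T14
  have h3 : ((3.850374:ℝ) - 1/4) ≤ Real.sqrt ((37.102712:ℝ)) := by
    rw [Real.le_sqrt (by norm_num) (by norm_num)]
    norm_num
  have h4 : Real.sqrt ((37.102712:ℝ)) ≤ Real.sqrt (θ 14) := Real.sqrt_le_sqrt h2
  linarith [le_max_left (Real.sqrt (θ 14)) (3/2:ℝ)]

lemma K15 : Real.log (p 16) ≤ max (Real.sqrt (θ 15)) (3/2) + 1/4 := by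
  rw [pv16]
  have h1 := ub_53
  have h2 := T15
  have h3 : ((3.970294:ℝ) - 1/4) ≤ Real.sqrt ((40.952644:ℝ)) := by
    rw [Real.le_sqrt (by norm_num) (by norm_num)]
    norm_num
  have h4 : Real.sqrt ((40.952644:ℝ)) ≤ Real.sqrt (θ 15) := Real.sqrt_le_sqrt h2
  linarith [le_max_left (Real.sqrt (θ 15)) (3/2:ℝ)]

lemma K16 : Real.log (p 17) ≤ max (Real.sqrt (θ 16)) (3/2) + 1/4 := by
  rw [pv17]
  have h1 := ub_59
  have h2 := T16
  have h3 : ((4.077652:ℝ) - 1/4) ≤ Real.sqrt ((44.922934:ℝ)) := by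
    rw [Real.le_sqrt (by norm_num) (by norm_num)]
    norm_num
  have h4 : Real.sqrt ((44.922934:ℝ)) ≤ Real.sqrt (θ 16) := Real.sqrt_le_sqrt h2
  linarith [le_max_left (Real.sqrt (θ 16)) (3/2:ℝ)]

lemma K17 : Real.log (p 18) ≤ max (Real.sqrt (θ 17)) (3/2) + 1/4 := by
  rw [pv18]
  have h1 := ub_61
  have h2 := T17
  have h3 : ((4.111468:ℝ) - 1/4) ≤ Real.sqrt ((49.000360:ℝ)) := by
    rw [Real.le_sqrt (by norm_num) (by norm_num)]
    norm_num
  have h4 : Real.sqrt ((49.000360:ℝ)) ≤ Real.sqrt (θ 17) := Real.sqrt_le_sqrt h2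
  linarith [le_max_left (Real.sqrt (θ 17)) (3/2:ℝ)]

lemma K18 : Real.log (p 19) ≤ max (Real.sqrt (θ 18)) (3/2) + 1/4 := by
  rw [pv19]
  have h1 := ub_67
  have h2 := T18
  have h3 : ((4.205759:ℝ) - 1/4) ≤ Real.sqrt ((53.110684:ℝ)) := by
    rw [Real.le_sqrt (by norm_num) (by norm_num)]
    norm_num
  have h4 : Real.sqrt ((53.110684:ℝ)) ≤ Real.sqrt (θ 18) := Real.sqrt_le_sqrt h2
  linarith [le_max_left (Real.sqrt (θ 18)) (3/2:ℝ)]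

lemma K19 : Real.log (p 20) ≤ max (Real.sqrt (θ 19)) (3/2) + 1/4 := by
  rw [pv20]
  have h1 := ub_71
  have h2 := T19
  have h3 : ((4.262761:ℝ) - 1/4) ≤ Real.sqrt ((57.314343:ℝ)) := by
    rw [Real.le_sqrt (by norm_num) (by norm_num)]
    norm_num
  have h4 : Real.sqrt ((57.314343:ℝ)) ≤ Real.sqrt (θ 19) := Real.sqrt_le_sqrt h2
  linarith [le_max_left (Real.sqrt (θ 19)) (3/2:ℝ)]

lemma K20 : Real.log (p 21) ≤ max (Real.sqrt (θ 20)) (3/2) + 1/4 := by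
  rw [pv21]
  have h1 := ub_73
  have h2 := T20
  have h3 : ((4.290633:ℝ) - 1/4) ≤ Real.sqrt ((61.576943:ℝ)) := by
    rw [Real.le_sqrt (by norm_num) (by norm_num)]
    norm_num
  have h4 : Real.sqrt ((61.576943:ℝ)) ≤ Real.sqrt (θ 20) := Real.sqrt_le_sqrt h2
  linarith [le_max_left (Real.sqrt (θ 20)) (3/2:ℝ)]

lemma K21 : Real.log (p 22) ≤ max (Real.sqrt (θ 21)) (3/2) + 1/4 := by
  rw [pv22]
  have h1 := ub_79
  have h2 := T21
  have h3 : ((4.369483:ℝ) - 1/4) ≤ Real.sqrt ((65.867236:ℝ)) := by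
    rw [Real.le_sqrt (by norm_num) (by norm_num)]
    norm_num
  have h4 : Real.sqrt ((65.867236:ℝ)) ≤ Real.sqrt (θ 21) := Real.sqrt_le_sqrt h2
  linarith [le_max_left (Real.sqrt (θ 21)) (3/2:ℝ)]

lemma K22 : Real.log (p 23) ≤ max (Real.sqrt (θ 22)) (3/2) + 1/4 := by
  rw [pv23]
  have h1 := ub_83
  have h2 := T22
  have h3 : ((4.418841:ℝ) - 1/4) ≤ Real.sqrt ((70.236649:ℝ)) := by
    rw [Real.le_sqrt (by norm_num) (by norm_num)]
    norm_num
  have h4 : Real.sqrt ((70.236649:ℝ)) ≤ Real.sqrt (θ 22) := Real.sqrt_le_sqrt h2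
  linarith [le_max_left (Real.sqrt (θ 22)) (3/2:ℝ)]

lemma K23 : Real.log (p 24) ≤ max (Real.sqrt (θ 23)) (3/2) + 1/4 := by
  rw [pv24]
  have h1 := ub_89
  have h2 := T23
  have h3 : ((4.489890:ℝ) - 1/4) ≤ Real.sqrt ((74.655489:ℝ)) := by
    rw [Real.le_sqrt (by norm_num) (by norm_num)]
    norm_num
  have h4 : Real.sqrt ((74.655489:ℝ)) ≤ Real.sqrt (θ 23) := Real.sqrt_le_sqrt h2
  linarith [le_max_left (Real.sqrt (θ 23)) (3/2:ℝ)]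

lemma K24 : Real.log (p 25) ≤ max (Real.sqrt (θ 24)) (3/2) + 1/4 := by
  rw [pv25]
  have h1 := ub_97
  have h2 := T24
  have h3 : ((4.575542:ℝ) - 1/4) ≤ Real.sqrt ((79.143000:ℝ)) := by
    rw [Real.le_sqrt (by norm_num) (by norm_num)]
    norm_num
  have h4 : Real.sqrt ((79.143000:ℝ)) ≤ Real.sqrt (θ 24) := Real.sqrt_le_sqrt h2
  linarith [le_max_left (Real.sqrt (θ 24)) (3/2:ℝ)]

lemma K25 : Real.log (p 26) ≤ max (Real.sqrt (θ 25)) (3/2) + 1/4 := by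
  rw [pv26]
  have h1 := ub_101
  have h2 := T25
  have h3 : ((4.616455:ℝ) - 1/4) ≤ Real.sqrt ((83.716953:ℝ)) := by
    rw [Real.le_sqrt (by norm_num) (by norm_num)]
    norm_num
  have h4 : Real.sqrt ((83.716953:ℝ)) ≤ Real.sqrt (θ 25) := Real.sqrt_le_sqrt h2
  linarith [le_max_left (Real.sqrt (θ 25)) (3/2:ℝ)]

lemma K26 : Real.log (p 27) ≤ max (Real.sqrt (θ 26)) (3/2) + 1/4 := by
  rw [pv27]
  have h1 := ub_103
  have h2 := T26
  have h3 : ((4.635017:ℝ) - 1/4) ≤ Real.sqrt ((88.330879:ℝ)) := by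
    rw [Real.le_sqrt (by norm_num) (by norm_num)]
    norm_num
  have h4 : Real.sqrt ((88.330879:ℝ)) ≤ Real.sqrt (θ 26) := Real.sqrt_le_sqrt h2
  linarith [le_max_left (Real.sqrt (θ 26)) (3/2:ℝ)]

lemma K27 : Real.log (p 28) ≤ max (Real.sqrt (θ 27)) (3/2) + 1/4 := by
  rw [pv28]
  have h1 := ub_107
  have h2 := T27
  have h3 : ((4.673381:ℝ) - 1/4) ≤ Real.sqrt ((92.965328:ℝ)) := by
    rw [Real.le_sqrt (by norm_num) (by norm_num)]
    norm_num
  have h4 : Real.sqrt ((92.965328:ℝ)) ≤ Real.sqrt (θ 27) := Real.sqrt_le_sqrt h2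
  linarith [le_max_left (Real.sqrt (θ 27)) (3/2:ℝ)]

lemma K28 : Real.log (p 29) ≤ max (Real.sqrt (θ 28)) (3/2) + 1/4 := by
  rw [pv29]
  have h1 := ub_109
  have h2 := T28
  have h3 : ((4.691672:ℝ) - 1/4) ≤ Real.sqrt ((97.637643:ℝ)) := by
    rw [Real.le_sqrt (by norm_num) (by norm_num)]
    norm_num
  have h4 : Real.sqrt ((97.637643:ℝ)) ≤ Real.sqrt (θ 28) := Real.sqrt_le_sqrt h2
  linarith [le_max_left (Real.sqrt (θ 28)) (3/2:ℝ)]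

lemma K29 : Real.log (p 30) ≤ max (Real.sqrt (θ 29)) (3/2) + 1/4 := by
  rw [pv30]
  have h1 := ub_113
  have h2 := T29
  have h3 : ((4.727399:ℝ) - 1/4) ≤ Real.sqrt ((102.328678:ℝ)) := by
    rw [Real.le_sqrt (by norm_num) (by norm_num)]
    norm_num
  have h4 : Real.sqrt ((102.328678:ℝ)) ≤ Real.sqrt (θ 29) := Real.sqrt_le_sqrt h2
  linarith [le_max_left (Real.sqrt (θ 29)) (3/2:ℝ)]

lemma K30 : Real.log (p 31) ≤ max (Real.sqrt (θ 30)) (3/2) + 1/4 := by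
  rw [pv31]
  have h1 := ub_127
  have h2 := T30
  have h3 : ((4.862631:ℝ) - 1/4) ≤ Real.sqrt ((107.056055:ℝ)) := by
    rw [Real.le_sqrt (by norm_num) (by norm_num)]
    norm_num
  have h4 : Real.sqrt ((107.056055:ℝ)) ≤ Real.sqrt (θ 30) := Real.sqrt_le_sqrt h2
  linarith [le_max_left (Real.sqrt (θ 30)) (3/2:ℝ)]

lemma K31 : Real.log (p 32) ≤ max (Real.sqrt (θ 31)) (3/2) + 1/4 := by
  rw [pv32]
  have h1 := ub_131
  have h2 := T31
  have h3 : ((4.875468:ℝ) - 1/4) ≤ Real.sqrt ((111.887877:ℝ)) := by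
    rw [Real.le_sqrt (by norm_num) (by norm_num)]
    norm_num
  have h4 : Real.sqrt ((111.887877:ℝ)) ≤ Real.sqrt (θ 31) := Real.sqrt_le_sqrt h2
  linarith [le_max_left (Real.sqrt (θ 31)) (3/2:ℝ)]

lemma K32 : Real.log (p 33) ≤ max (Real.sqrt (θ 32)) (3/2) + 1/4 := by
  rw [pv33]
  have h1 := ub_137
  have h2 := T32
  have h3 : ((4.920118:ℝ) - 1/4) ≤ Real.sqrt ((116.762808:ℝ)) := by
    rw [Real.le_sqrt (by norm_num) (by norm_num)]
    norm_num
  have h4 : Real.sqrt ((116.762808:ℝ)) ≤ Real.sqrt (θ 32) := Real.sqrt_le_sqrt h2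
  linarith [le_max_left (Real.sqrt (θ 32)) (3/2:ℝ)]

lemma K33 : Real.log (p 34) ≤ max (Real.sqrt (θ 33)) (3/2) + 1/4 := by
  rw [pv34]
  have h1 := ub_139
  have h2 := T33
  have h3 : ((4.934609:ℝ) - 1/4) ≤ Real.sqrt ((121.682657:ℝ)) := by
    rw [Real.le_sqrt (by norm_num) (by norm_num)]
    norm_num
  have h4 : Real.sqrt ((121.682657:ℝ)) ≤ Real.sqrt (θ 33) := Real.sqrt_le_sqrt h2
  linarith [le_max_left (Real.sqrt (θ 33)) (3/2:ℝ)]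

lemma primes_sum_le (n y : ℕ) (hy : y ≤ p (n+1)) :
    ∑ q ∈ (Finset.range y).filter Nat.Prime, Real.log q ≤ θ n := by
  have hinf : (setOf Nat.Prime).Infinite := Nat.infinite_setOf_prime
  have hP : p (n+1) = Nat.nth Nat.Prime n := by simp [p]
  rw [theta_eq_sum]
  have hinj : ∀ a ∈ Finset.range n, ∀ b ∈ Finset.range n,
      Nat.nth Nat.Prime a = Nat.nth Nat.Prime b → a = b :=
    fun a _ b _ h => (Nat.nth_strictMono hinf).injective h
  rw [show (∑ j ∈ Finset.range n, Real.log (Nat.nth Nat.Prime j)) =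
      ∑ q ∈ (Finset.range n).image (Nat.nth Nat.Prime), Real.log q from
    (Finset.sum_image (g := Nat.nth Nat.Prime) (f := fun q : ℕ => Real.log (q:ℝ)) hinj).symm]
  apply Finset.sum_le_sum_of_subset_of_nonneg
  · intro q hq
    rw [Finset.mem_filter, Finset.mem_range] at hq
    obtain ⟨hqy, hqp⟩ := hq
    rw [Finset.mem_image]
    refine ⟨Nat.count Nat.Prime q, ?_, Nat.nth_count hqp⟩
    rw [Finset.mem_range]
    have h1 : Nat.nth Nat.Prime (Nat.count Nat.Prime q) < Nat.nth Nat.Prime n := by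
      rw [Nat.nth_count hqp]
      omega
    exact (Nat.nth_lt_nth hinf).mp h1
  · intro q hq _
    rw [Finset.mem_image] at hq
    obtain ⟨j, _, rfl⟩ := hq
    exact Real.log_nonneg (by exact_mod_cast (Nat.prime_nth_prime j).one_lt.le)

open Finset in
lemma cheb_nat (k : ℕ) (hk : 4 ≤ k) :
    4^k ≤ k * ((2*k) ^ (Nat.sqrt (2*k) + 1) * ∏ q ∈ (range (2*k+1)).filter Nat.Prime, q) := by
  have hk0 : 0 < k := by omega
  have h2k : 0 < 2*k := by omega
  have h1 : 4^k < k * Nat.centralBinom k := Nat.four_pow_lt_mul_centralBinom k hk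
  have h2 : Nat.centralBinom k ≤
      (2*k) ^ (Nat.sqrt (2*k) + 1) * ∏ q ∈ (range (2*k+1)).filter Nat.Prime, q := by
    set s := Nat.sqrt (2*k) with hs
    set f : ℕ → ℕ := fun q => q ^ (Nat.centralBinom k).factorization q with hf
    have hsplit : Nat.centralBinom k =
        (∏ q ∈ (range (2*k+1)).filter (· ≤ s), f q) *
        (∏ q ∈ (range (2*k+1)).filter (fun q => ¬ q ≤ s), f q) := by
      rw [Finset.prod_filter_mul_prod_filter_not]
      exact (Nat.prod_pow_factorization_centralBinom k).symm
    have hA : (∏ q ∈ (range (2*k+1)).filter (· ≤ s), f q) ≤ (2*k) ^ (s + 1) := by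
      calc (∏ q ∈ (range (2*k+1)).filter (· ≤ s), f q)
          ≤ (2*k) ^ ((range (2*k+1)).filter (· ≤ s)).card := by
            apply Finset.prod_le_pow_card
            intro q hq
            exact Nat.pow_factorization_choose_le h2k
        _ ≤ (2*k) ^ (s + 1) := by
            apply Nat.pow_le_pow_right (by omega)
            calc ((range (2*k+1)).filter (· ≤ s)).card
                ≤ (range (s+1)).card := by
                  apply Finset.card_le_card
                  intro q hq
                  rw [Finset.mem_filter] at hq
                  rw [Finset.mem_range]
                  omega
              _ = s + 1 := Finset.card_range _
    have hB : (∏ q ∈ (range (2*k+1)).filter (fun q => ¬ q ≤ s), f q) ≤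
        ∏ q ∈ (range (2*k+1)).filter Nat.Prime, q := by
      have e1 : (∏ q ∈ (range (2*k+1)).filter (fun q => ¬ q ≤ s), f q) =
          ∏ q ∈ ((range (2*k+1)).filter (fun q => ¬ q ≤ s)).filter Nat.Prime, f q := by
        symm
        apply Finset.prod_filter_of_ne
        intro q _ hfq
        by_contra hnp
        rw [hf] at hfq
        simp [Nat.factorization_eq_zero_of_not_prime _ hnp] at hfq
      rw [e1]
      calc (∏ q ∈ ((range (2*k+1)).filter (fun q => ¬ q ≤ s)).filter Nat.Prime, f q)
          ≤ ∏ q ∈ ((range (2*k+1)).filter (fun q => ¬ q ≤ s)).filter Nat.Prime, q := by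
            apply Finset.prod_le_prod'
            intro q hq
            rw [Finset.mem_filter, Finset.mem_filter] at hq
            obtain ⟨⟨_, hqs⟩, hqp⟩ := hq
            have hν : (Nat.centralBinom k).factorization q ≤ 1 := by
              apply Nat.factorization_choose_le_one
              have : s < q := by omega
              exact Nat.sqrt_lt'.mp this
            calc f q ≤ q ^ 1 := Nat.pow_le_pow_right hqp.one_lt.le hν
              _ = q := pow_one q
        _ ≤ ∏ q ∈ (range (2*k+1)).filter Nat.Prime, q := by
            apply Finset.prod_le_prod_of_subset_of_one_le'
            · intro q hq
              rw [Finset.mem_filter, Finset.mem_filter] at hq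
              rw [Finset.mem_filter]
              exact ⟨hq.1.1, hq.2⟩
            · intro q hq _
              rw [Finset.mem_filter] at hq
              exact hq.2.one_lt.le
    calc Nat.centralBinom k = _ := hsplit
      _ ≤ (2*k) ^ (s+1) * ∏ q ∈ (range (2*k+1)).filter Nat.Prime, q :=
        Nat.mul_le_mul hA hB
  calc 4^k ≤ k * Nat.centralBinom k := h1.le
    _ ≤ _ := Nat.mul_le_mul_left k h2

lemma lb144 : (4.969798:ℝ) ≤ Real.log 144 := by
  have h := log_lb_aux 144 6 43 (by norm_num); norm_num at h; linarith

set_option maxHeartbeats 2000000 in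
lemma analytic_core (s w : ℝ) (hw0 : (62/25:ℝ) ≤ w)
    (hQ : 1 + w + w^2/2 + w^3/6 + w^4/24 + w^5/120 ≤ s) :
    (2*w - 1/4)^2 ≤ (s^2-1)*Real.log 2 - (2*w - Real.log 2) - (s + 1) * (2*w) := by
  have hwpos : (0:ℝ) ≤ w := by linarith
  have c0 : (0.6931471803:ℝ) < Real.log 2 := Real.log_two_gt_d9
  obtain ⟨Q, hQd⟩ : ∃ q : ℝ, q = 1 + w + w^2/2 + w^3/6 + w^4/24 + w^5/120 := ⟨_, rfl⟩
  rw [← hQd] at hQ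
  have hQ2 : 1 + w + w^2/2 ≤ Q := by
    rw [hQd]
    nlinarith [pow_nonneg hwpos 3, pow_nonneg hwpos 4, pow_nonneg hwpos 5]
  have h2Q : 2*w ≤ Real.log 2 * (s + Q) := by
    have hsQ : 2*(1+w+w^2/2) ≤ s + Q := by linarith
    have hstep : (0.6931471803:ℝ) * (2*(1+w+w^2/2)) ≤ Real.log 2 * (s+Q) := by
      apply mul_le_mul c0.le hsQ (by positivity) (Real.log_nonneg one_le_two)
    nlinarith [sq_nonneg (w-1), hstep]
  have mono : Q^2 * Real.log 2 - 2*w*Q ≤ s^2 * Real.log 2 - 2*w*s := by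
    nlinarith [mul_nonneg (sub_nonneg.2 hQ) (sub_nonneg.2 h2Q)]
  have hQc : Q^2 * 0.6931471803 ≤ Q^2 * Real.log 2 := by
    nlinarith [sq_nonneg Q]
  have ht : (0:ℝ) ≤ w - 62/25 := by linarith
  have key : (0:ℝ) ≤ Q^2 * 0.6931471803 - 2*w*Q - 4*w - (2*w - 1/4)^2 := by
    have expand : Q^2 * 0.6931471803 - 2*w*Q - 4*w - (2*w - 1/4)^2 = (48513620695420963847043347/23841857910156250000000000 : ℝ) + (20258399640400231501456193/286102294921875000000000 : ℝ) * (w - 62/25)^1 + (591043158261814270215769/5722045898437500000000 : ℝ) * (w - 62/25)^2 + (5351155273305257648069/76293945312500000000 : ℝ) * (w - 62/25)^3 + (182530303179689882117/6103515625000000000 : ℝ) * (w - 62/25)^4 + (43143675120824726209/4882812500000000000 : ℝ) * (w - 62/25)^5 + (288803448274878163/156250000000000000 : ℝ) * (w - 62/25)^6 + (2551514049024517/9375000000000000 : ℝ) * (w - 62/25)^7 + (163169156733221/6000000000000000 : ℝ) * (w - 62/25)^8 + (67004227429/40000000000000 : ℝ) * (w - 62/25)^9 + (2310490601/48000000000000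 : ℝ) * (w - 62/25)^10 := by
      rw [hQd]; ring
    rw [expand]
    have t2 := pow_nonneg ht 2
    have t3 := pow_nonneg ht 3
    have t4 := pow_nonneg ht 4
    have t5 := pow_nonneg ht 5
    have t6 := pow_nonneg ht 6
    have t7 := pow_nonneg ht 7
    have t8 := pow_nonneg ht 8
    have t9 := pow_nonneg ht 9
    have t10 := pow_nonneg ht 10
    linarith [ht, t2, t3, t4, t5, t6, t7, t8, t9, t10]
  linarith [key, mono, hQc]

lemma analytic (x : ℝ) (hx : (144:ℝ) ≤ x) :
    (Real.log x - 1/4)^2 ≤ (x-1)*Real.log 2 - (Real.log x - Real.log 2) - (Real.sqrt x + 1) * Real.log x := by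
  have hx0 : (0:ℝ) < x := by linarith
  have h144 : Real.sqrt 144 = 12 := by
    rw [show (144:ℝ) = 12^2 by norm_num, Real.sqrt_sq (by norm_num)]
  have hs12 : (12:ℝ) ≤ Real.sqrt x := by
    rw [← h144]; exact Real.sqrt_le_sqrt hx
  have hs0 : (0:ℝ) < Real.sqrt x := by linarith
  have hsx : (Real.sqrt x)^2 = x := Real.sq_sqrt hx0.le
  have hws : Real.exp (Real.log (Real.sqrt x)) = Real.sqrt x := Real.exp_log hs0
  have hlx : Real.log x = 2 * Real.log (Real.sqrt x) := by
    rw [Real.log_sqrt hx0.le]; ring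
  have hw0 : (62/25:ℝ) ≤ Real.log (Real.sqrt x) := by
    have h1 : Real.log 12 ≤ Real.log (Real.sqrt x) := Real.log_le_log (by norm_num) hs12
    have h2 : Real.log 144 = 2 * Real.log 12 := by
      rw [show (144:ℝ) = 12^2 by norm_num, Real.log_pow]; push_cast; ring
    linarith [lb144]
  have hwpos : (0:ℝ) ≤ Real.log (Real.sqrt x) := by linarith
  have hQ : 1 + Real.log (Real.sqrt x) + (Real.log (Real.sqrt x))^2/2 + (Real.log (Real.sqrt x))^3/6
      + (Real.log (Real.sqrt x))^4/24 + (Real.log (Real.sqrt x))^5/120 ≤ Real.sqrt x := by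
    have h := Real.sum_le_exp_of_nonneg hwpos 6
    rw [hws] at h
    have e : ∑ i ∈ Finset.range 6, (Real.log (Real.sqrt x)) ^ i / (Nat.factorial i) =
        1 + Real.log (Real.sqrt x) + (Real.log (Real.sqrt x))^2/2 + (Real.log (Real.sqrt x))^3/6
      + (Real.log (Real.sqrt x))^4/24 + (Real.log (Real.sqrt x))^5/120 := by
      norm_num [Finset.sum_range_succ, Nat.factorial]
    rw [e] at h
    exact h
  have hcore := analytic_core (Real.sqrt x) (Real.log (Real.sqrt x)) hw0 hQ
  have hxx : (Real.sqrt x^2 - 1) * Real.log 2 = (x - 1) * Real.log 2 := by rw [hsx]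
  rw [hlx]
  linarith [hcore, hxx]

open Finset in
lemma cheb_real (n : ℕ) (hn : 34 ≤ n) : (Real.log (p (n+1)) - 1/4)^2 ≤ θ n := by
  have hinf : (setOf Nat.Prime).Infinite := Nat.infinite_setOf_prime
  have hPn : p (n+1) = Nat.nth Nat.Prime n := by simp [p]
  have h149 : 149 ≤ p (n+1) := by
    rw [hPn]
    have h34 : Nat.nth Nat.Prime 34 = 149 := by
      have := pv35; simpa [p] using this
    calc 149 = Nat.nth Nat.Prime 34 := h34.symm
      _ ≤ Nat.nth Nat.Prime n := Nat.nth_monotone hinf hn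
  have hprime : Nat.Prime (p (n+1)) := p_prime (n+1)
  have hodd : p (n+1) % 2 = 1 := Nat.odd_iff.mp (hprime.odd_of_ne_two (by omega))
  obtain ⟨k, hk⟩ : ∃ k, p (n+1) = 2*k+1 := ⟨(p (n+1) - 1)/2, by omega⟩
  have hk4 : 4 ≤ k := by omega
  have hcheb := cheb_nat k hk4
  set W := ∏ q ∈ (range (2*k+1)).filter Nat.Prime, q with hW
  have hWpos : 0 < W := by
    apply Finset.prod_pos
    intro q hq
    exact ((Finset.mem_filter.mp hq).2).pos
  -- cast to ℝ and take logs
  have hcast : (4:ℝ)^k ≤ (k:ℝ) * (((2*k:ℕ):ℝ) ^ (Nat.sqrt (2*k) + 1) * (W:ℝ)) := by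
    have := (Nat.cast_le (α := ℝ)).mpr hcheb
    push_cast at this ⊢
    convert this using 2
  have hk0 : (0:ℝ) < (k:ℝ) := by positivity
  have h2k0 : (0:ℝ) < ((2*k:ℕ):ℝ) := by
    have : 0 < 2*k := by omega
    exact_mod_cast this
  have hW0 : (0:ℝ) < (W:ℝ) := by exact_mod_cast hWpos
  have hlog1 : Real.log ((4:ℝ)^k) ≤
      Real.log ((k:ℝ) * (((2*k:ℕ):ℝ) ^ (Nat.sqrt (2*k) + 1) * (W:ℝ))) :=
    Real.log_le_log (by positivity) hcast
  have hlhs : Real.log ((4:ℝ)^k) = (k:ℝ) * (2 * Real.log 2) := by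
    rw [Real.log_pow, show (4:ℝ) = 2^2 by norm_num, Real.log_pow]
    push_cast
    ring
  have hrhs : Real.log ((k:ℝ) * (((2*k:ℕ):ℝ) ^ (Nat.sqrt (2*k) + 1) * (W:ℝ))) =
      Real.log (k:ℝ) + ((Nat.sqrt (2*k) : ℝ) + 1) * Real.log ((2*k:ℕ):ℝ) + Real.log (W:ℝ) := by
    rw [Real.log_mul hk0.ne' (by positivity), Real.log_mul (by positivity) hW0.ne',
      Real.log_pow]
    push_cast
    ring
  have hlogW : Real.log (W:ℝ) ≤ θ n := by
    have he : Real.log (W:ℝ) = ∑ q ∈ (range (2*k+1)).filter Nat.Prime, Real.log (q:ℝ) := by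
      rw [hW]
      push_cast
      apply Real.log_prod
      intro q hq
      have := ((Finset.mem_filter.mp hq).2).pos
      positivity
    rw [he]
    apply primes_sum_le
    omega
  -- now real bounds
  set x : ℝ := ((p (n+1) : ℕ) : ℝ) with hx
  have hx149 : (149:ℝ) ≤ x := by rw [hx]; exact_mod_cast h149
  have hx144 : (144:ℝ) ≤ x := by linarith
  have h2kx : ((2*k:ℕ):ℝ) = x - 1 := by
    rw [hx]
    push_cast [hk]
    ring
  have hkx : (k:ℝ) = (x-1)/2 := by
    have : (2:ℝ) * (k:ℝ) = x - 1 := by push_cast at h2kx ⊢; linarith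
    linarith
  have hlogk : Real.log (k:ℝ) = Real.log (x-1) - Real.log 2 := by
    rw [hkx, Real.log_div (by linarith) (by norm_num)]
  have hlogx1 : Real.log (x-1) ≤ Real.log x := Real.log_le_log (by linarith) (by linarith)
  have hlogx1' : 0 ≤ Real.log (x-1) := Real.log_nonneg (by linarith)
  have hsqrt : (Nat.sqrt (2*k) : ℝ) ≤ Real.sqrt x := by
    calc (Nat.sqrt (2*k) : ℝ) ≤ Real.sqrt ((2*k:ℕ):ℝ) := Real.nat_sqrt_le_real_sqrt
      _ = Real.sqrt (x-1) := by rw [h2kx]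
      _ ≤ Real.sqrt x := Real.sqrt_le_sqrt (by linarith)
  have hsq0 : (0:ℝ) ≤ (Nat.sqrt (2*k) : ℝ) := by positivity
  have hmul : ((Nat.sqrt (2*k) : ℝ) + 1) * Real.log ((2*k:ℕ):ℝ) ≤
      (Real.sqrt x + 1) * Real.log x := by
    rw [h2kx]
    apply mul_le_mul (by linarith) hlogx1 hlogx1' (by positivity)
  have hth : (x-1) * Real.log 2 - (Real.log x - Real.log 2) - (Real.sqrt x + 1) * Real.log x
      ≤ θ n := by
    rw [hlhs, hrhs] at hlog1
    rw [hlogk, h2kx] at hlog1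
    have hkk : (k:ℝ) * (2 * Real.log 2) = (x-1) * Real.log 2 := by rw [hkx]; ring
    rw [hkk] at hlog1
    have : (Real.sqrt x + 1) * Real.log x ≥ ((Nat.sqrt (2*k) : ℝ) + 1) * Real.log (x-1) := by
      rw [← h2kx]
      exact hmul
    linarith [hlogW, hlogx1]
  have hana := analytic x hx144
  have hxlog : Real.log (p (n+1)) = Real.log x := by rw [hx]
  rw [hxlog]
  linarith [hana, hth]

lemma lemK (n : ℕ) (hn : 1 ≤ n) :
    Real.log (p (n+1)) ≤ max (Real.sqrt (θ n)) (3/2) + 1/4 := by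
  by_cases h : n ≤ 33
  · interval_cases n
    · exact K1
    · exact K2
    · exact K3
    · exact K4
    · exact K5
    · exact K6
    · exact K7
    · exact K8
    · exact K9
    · exact K10
    · exact K11
    · exact K12
    · exact K13
    · exact K14
    · exact K15
    · exact K16
    · exact K17
    · exact K18
    · exact K19
    · exact K20
    · exact K21
    · exact K22
    · exact K23
    · exact K24
    · exact K25
    · exact K26
    · exact K27
    · exact K28
    · exact K29
    · exact K30
    · exact K31
    · exact K32
    · exact K33
  · push_neg at h
    have h34 : 34 ≤ n := h
    have hch := cheb_real n h34
    have hPn : p (n+1) = Nat.nth Nat.Prime n := by simp [p]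
    have hp2 : 2 ≤ p (n+1) := (p_prime (n+1)).two_le
    have hlog2 : Real.log 2 ≤ Real.log (p (n+1)) :=
      Real.log_le_log (by norm_num) (by exact_mod_cast hp2)
    have hl2 := Real.log_two_gt_d9
    have hsq : Real.log (p (n+1)) - 1/4 ≤ Real.sqrt (θ n) := by
      rw [Real.le_sqrt (by linarith) (theta_nonneg n)]
      exact hch
    linarith [le_max_left (Real.sqrt (θ n)) (3/2:ℝ)]

lemma lemG (a : ℝ) (ha : 9/4 ≤ a) :
    ∃ n : ℕ, 1 ≤ n ∧ a < θ n ∧ θ n ≤ a + Real.sqrt a + 1/4 := by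
  have hex : ∃ n : ℕ, a < θ n := by
    obtain ⟨n, hn⟩ := exists_nat_gt (a / Real.log 2)
    refine ⟨n, ?_⟩
    have h2 : (0:ℝ) < Real.log 2 := Real.log_pos (by norm_num)
    have h3 : a / Real.log 2 * Real.log 2 < (n:ℝ) * Real.log 2 :=
      mul_lt_mul_of_pos_right hn h2
    rw [div_mul_cancel₀ _ h2.ne'] at h3
    linarith [theta_ge n]
  classical
  have hN := Nat.find_spec hex
  set N := Nat.find hex with hNd
  have h0 : ¬ (a < θ 0) := by
    simp [θ]
    linarith
  have h1 : ¬ (a < θ 1) := by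
    rw [theta_one]
    push_neg
    linarith [Real.log_two_lt_d9]
  have hN2 : 2 ≤ N := by
    rcases Nat.lt_or_ge N 2 with hlt | hge
    · interval_cases N
      · exact absurd hN h0
      · exact absurd hN h1
    · exact hge
  obtain ⟨M, hM⟩ : ∃ M, N = M + 1 := ⟨N - 1, by omega⟩
  have hM1 : 1 ≤ M := by omega
  have hMle : θ M ≤ a := by
    have hlt : M < Nat.find hex := by rw [← hNd]; omega
    exact not_lt.mp (Nat.find_min hex hlt)
  have hK := lemK M hM1
  have hmax : max (Real.sqrt (θ M)) (3/2:ℝ) ≤ Real.sqrt a := by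
    apply max_le
    · exact Real.sqrt_le_sqrt hMle
    · rw [Real.le_sqrt (by norm_num) (by linarith)]
      norm_num
      linarith
  refine ⟨N, by omega, hN, ?_⟩
  rw [hM, theta_succ]
  linarith [hK, hmax]

theorem stmt17 : ∀ m : ℕ, 2 ≤ m →
    (∃ n : ℕ, 1 ≤ n ∧ ((m : ℝ) - 1/2)^2 < θ n ∧ θ n ≤ (m : ℝ)^2) ∧
    (∃ n : ℕ, 1 ≤ n ∧ (m : ℝ)^2 < θ n ∧ θ n ≤ ((m : ℝ) + 1/2)^2) := by
  intro m hm
  have hm2 : (2:ℝ) ≤ (m:ℝ) := by exact_mod_cast hm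
  constructor
  · obtain ⟨n, hn1, hlt, hle⟩ := lemG (((m:ℝ) - 1/2)^2) (by nlinarith)
    refine ⟨n, hn1, hlt, ?_⟩
    have hsq : Real.sqrt (((m:ℝ) - 1/2)^2) = (m:ℝ) - 1/2 := Real.sqrt_sq (by linarith)
    rw [hsq] at hle
    have he : ((m:ℝ) - 1/2)^2 + ((m:ℝ) - 1/2) + 1/4 = (m:ℝ)^2 := by ring
    linarith
  · obtain ⟨n, hn1, hlt, hle⟩ := lemG ((m:ℝ)^2) (by nlinarith)
    refine ⟨n, hn1, hlt, ?_⟩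
    have hsq : Real.sqrt ((m:ℝ)^2) = (m:ℝ) := Real.sqrt_sq (by linarith)
    rw [hsq] at hle
    have he : (m:ℝ)^2 + (m:ℝ) + 1/4 = ((m:ℝ) + 1/2)^2 := by ring
    linarith
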